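/- arXiv:2307.06987 — 2 statements merged into one kernel-verified Lean document; each statement's English description precedes it below -/
import Mathlib

section
/- Let F : ℝᴺ → ℝ be differentiable, coercive, and bounded below with β-Lipschitz gradient, and let (x_k) be generated by gradient descent x_{k+1} = x_k − α∇F(x_k) with 0 < α < 2/β. Then ∑_{k=0}^∞ ‖∇F(x_k)‖² < ∞ and ∇F(x_k) → 0. -/
open Filter RealInnerProductSpace

lemma descent_aux {N : ℕ} (F : EuclideanSpace ℝ (Fin N) → ℝ) (β : ℝ)
    (hdiff : Differentiable ℝ F)
    (hlip : ∀ x y, ‖gradient F x - gradient F y‖ ≤ β * ‖x - y‖)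
    (x d : EuclideanSpace ℝ (Fin N)) :
    F (x + d) ≤ F x + ⟪gradient F x, d⟫ + β / 2 * ‖d‖ ^ 2 := by
  have hφ : ∀ t : ℝ, HasDerivAt (fun t : ℝ => F (x + t • d))
      ⟪gradient F (x + t • d), d⟫ t := by
    intro t
    have h1 : HasDerivAt (fun t : ℝ => x + t • d) d t := by
      simpa using ((hasDerivAt_id t).smul_const d).const_add x
    have h2 := (hdiff (x + t • d)).hasGradientAt.hasFDerivAt
    have := h2.comp_hasDerivAt t h1
    simpa [InnerProductSpace.toDual_apply_apply, Function.comp_def] using this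
  set c : ℝ := ⟪gradient F x, d⟫ with hc
  set K : ℝ := β / 2 * ‖d‖ ^ 2 with hK
  set h : ℝ → ℝ := fun t => F x + t * c + K * t ^ 2 - F (x + t • d) with hh
  have hderiv : ∀ t : ℝ, HasDerivAt h
      (c + K * (2 * t) - ⟪gradient F (x + t • d), d⟫) t := by
    intro t
    have h1 : HasDerivAt (fun t : ℝ => F x + t * c + K * t ^ 2) (c + K * (2 * t)) t := by
      have := ((hasDerivAt_id t).mul_const c).const_add (F x)
      have h2 := (hasDerivAt_pow 2 t).const_mul K
      simpa [mul_comm, Pi.add_def] using this.add h2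
    exact h1.sub (hφ t)
  have hmono : MonotoneOn h (Set.Icc (0:ℝ) 1) := by
    apply monotoneOn_of_deriv_nonneg (convex_Icc 0 1)
    · have hF : Continuous F := hdiff.continuous
      exact Continuous.continuousOn (by fun_prop)
    · intro t ht
      exact (hderiv t).differentiableAt.differentiableWithinAt
    · intro t ht
      rw [interior_Icc] at ht
      rw [(hderiv t).deriv]
      have hinner : ⟪gradient F (x + t • d) - gradient F x, d⟫ ≤ β * t * ‖d‖ ^ 2 := by
        calc ⟪gradient F (x + t • d) - gradient F x, d⟫
            ≤ ‖gradient F (x + t • d) - gradient F x‖ * ‖d‖ := real_inner_le_norm _ _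
          _ ≤ β * ‖(x + t • d) - x‖ * ‖d‖ :=
              mul_le_mul_of_nonneg_right (hlip _ _) (norm_nonneg d)
          _ = β * t * ‖d‖ ^ 2 := by
              rw [add_sub_cancel_left, norm_smul, Real.norm_eq_abs,
                abs_of_pos ht.1]; ring
      have : ⟪gradient F (x + t • d), d⟫ - c ≤ β * t * ‖d‖ ^ 2 := by
        rw [hc, ← inner_sub_left]; exact hinner
      have hKt : K * (2 * t) = β * t * ‖d‖ ^ 2 := by rw [hK]; ring
      linarith
  have h01 := hmono (Set.left_mem_Icc.2 zero_le_one) (Set.right_mem_Icc.2 zero_le_one)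
    zero_le_one
  simp only [hh] at h01
  simp only [zero_smul, add_zero, zero_mul, mul_zero, one_smul, one_mul, one_pow,
    mul_one, zero_pow] at h01
  linarith

theorem stmt6 {N : ℕ} (F : EuclideanSpace ℝ (Fin N) → ℝ) (β α : ℝ) (hβ : 0 < β)
    (hα : 0 < α) (hα2 : α < 2 / β) (hdiff : Differentiable ℝ F)
    (hlip : ∀ x y, ‖gradient F x - gradient F y‖ ≤ β * ‖x - y‖)
    (hcoercive : Tendsto F (cocompact _) atTop)
    (hbdd : BddBelow (Set.range F))
    (x : ℕ → EuclideanSpace ℝ (Fin N))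
    (hx : ∀ k, x (k + 1) = x k - α • gradient F (x k)) :
    (Summable fun k => ‖gradient F (x k)‖ ^ 2) ∧
    Tendsto (fun k => gradient F (x k)) atTop (nhds 0) := by
  set g : ℕ → EuclideanSpace ℝ (Fin N) := fun k => gradient F (x k) with hg
  set c : ℝ := α * (1 - α * β / 2) with hcdef
  have hc : 0 < c := by
    have : α * β < 2 := by
      rw [lt_div_iff₀ hβ] at hα2; linarith
    have : 0 < 1 - α * β / 2 := by linarith
    positivity
  have hstep : ∀ k, F (x (k + 1)) ≤ F (x k) - c * ‖g k‖ ^ 2 := by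
    intro k
    have hxk : x (k + 1) = x k + (-(α • g k)) := by
      rw [hx k]; abel
    have := descent_aux F β hdiff hlip (x k) (-(α • g k))
    rw [← hxk] at this
    have hi : ⟪g k, -(α • g k)⟫ = -(α * ‖g k‖ ^ 2) := by
      rw [inner_neg_right, real_inner_smul_right, real_inner_self_eq_norm_sq]
    have hn : ‖-(α • g k)‖ ^ 2 = α ^ 2 * ‖g k‖ ^ 2 := by
      rw [norm_neg, norm_smul, Real.norm_eq_abs, abs_of_pos hα]; ring
    rw [hi, hn] at this
    calc F (x (k + 1)) ≤ F (x k) + -(α * ‖g k‖ ^ 2) + β / 2 * (α ^ 2 * ‖g k‖ ^ 2) := this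
      _ = F (x k) - c * ‖g k‖ ^ 2 := by rw [hcdef]; ring
  obtain ⟨m, hm⟩ := hbdd
  have hmF : ∀ y, m ≤ F y := fun y => hm ⟨y, rfl⟩
  have hpartial : ∀ n, c * ∑ k ∈ Finset.range n, ‖g k‖ ^ 2 ≤ F (x 0) - F (x n) := by
    intro n
    induction n with
    | zero => simp
    | succ n ih =>
      rw [Finset.sum_range_succ, mul_add]
      have := hstep n
      linarith
  have hbound : ∀ n, ∑ k ∈ Finset.range n, ‖g k‖ ^ 2 ≤ (F (x 0) - m) / c := by
    intro n
    rw [le_div_iff₀ hc, mul_comm]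
    have := hpartial n
    have := hmF (x n)
    linarith
  have hsum : Summable fun k => ‖g k‖ ^ 2 :=
    summable_of_sum_range_le (fun k => by positivity) hbound
  refine ⟨hsum, ?_⟩
  have h1 : Tendsto (fun k => ‖g k‖ ^ 2) atTop (nhds 0) := hsum.tendsto_atTop_zero
  have h2 : Tendsto (fun k => ‖g k‖) atTop (nhds 0) := by
    have := h1.sqrt
    simpa [Real.sqrt_sq (norm_nonneg _)] using this
  exact tendsto_zero_iff_norm_tendsto_zero.mpr h2
end

section
/- Let F : ℝᴺ → ℝ be differentiable with β-Lipschitz gradient and bounded below by F_min. Suppose x_{k+1} = x_k − α_k g_k where g_k is a random vector with E_k[g_k] = ∇F(x_k) and E_k[‖g_k‖²] ≤ a_k(F(x_k) − F_min) + b_k‖∇F(x_k)‖² + c_k. Then almost surely E_k[F(x_{k+1})] − F_min ≤ (1 + α_k²a_kβ/2)(F(x_k) − F_min) − α_k(1 − α_k b_k β/2)‖∇F(x_k)‖² + α_k²c_kβ/2. -/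
open MeasureTheory


lemma grad_lip_continuous {N : ℕ} {F : EuclideanSpace ℝ (Fin N) → ℝ} {β : ℝ} (hβ : 0 ≤ β)
    (hlip : ∀ x y, ‖gradient F x - gradient F y‖ ≤ β * ‖x - y‖) :
    Continuous (fun y => gradient F y) := by
  have : LipschitzWith β.toNNReal (fun y => gradient F y) := by
    apply LipschitzWith.of_dist_le_mul
    intro p q
    rw [dist_eq_norm, dist_eq_norm]
    calc ‖gradient F p - gradient F q‖ ≤ β * ‖p - q‖ := hlip p q
      _ = β.toNNReal * ‖p - q‖ := by rw [Real.coe_toNNReal β hβ]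
  exact this.continuous

lemma descent_lemma {N : ℕ} {F : EuclideanSpace ℝ (Fin N) → ℝ} {β : ℝ} (hβ : 0 ≤ β)
    (hdiff : Differentiable ℝ F)
    (hlip : ∀ x y, ‖gradient F x - gradient F y‖ ≤ β * ‖x - y‖)
    (x v : EuclideanSpace ℝ (Fin N)) :
    F (x + v) ≤ F x + inner ℝ (gradient F x) v + β / 2 * ‖v‖ ^ 2 := by
  have hgc := grad_lip_continuous hβ hlip
  have hderiv : ∀ t : ℝ, HasDerivAt (fun t : ℝ => F (x + t • v))
      ((inner ℝ (gradient F (x + t • v)) v : ℝ)) t := by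
    intro t
    have hline : HasDerivAt (fun t : ℝ => x + t • v) v t := by
      simpa using ((hasDerivAt_id t).smul_const v).const_add x
    have hF := (hdiff (x + t • v)).hasGradientAt.hasFDerivAt
    have := hF.comp_hasDerivAt t hline
    simpa [InnerProductSpace.toDual_apply_apply, Function.comp_def] using this
  have hcont : Continuous (fun t : ℝ => (inner ℝ (gradient F (x + t • v)) v : ℝ)) := by
    exact (Continuous.inner (hgc.comp (continuous_const.add
      (continuous_id.smul continuous_const))) continuous_const)
  have heq : F (x + v) - F x = ∫ t in (0:ℝ)..1, (inner ℝ (gradient F (x + t • v)) v : ℝ) := by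
    have := intervalIntegral.integral_eq_sub_of_hasDerivAt
      (f := fun t : ℝ => F (x + t • v)) (fun t _ => hderiv t)
      (hcont.intervalIntegrable 0 1)
    rw [this]; simp
  have hmono : ∫ t in (0:ℝ)..1, (inner ℝ (gradient F (x + t • v)) v : ℝ) ≤
      ∫ t in (0:ℝ)..1, ((inner ℝ (gradient F x) v : ℝ) + β * ‖v‖ ^ 2 * t) := by
    apply intervalIntegral.integral_mono_on zero_le_one (hcont.intervalIntegrable 0 1)
      ((continuous_const.add (continuous_const.mul continuous_id')).intervalIntegrable 0 1)
    intro t ht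
    simp only [Pi.add_apply, Pi.mul_apply]
    have h1 : (inner ℝ (gradient F (x + t • v)) v : ℝ) - inner ℝ (gradient F x) v
        = inner ℝ (gradient F (x + t • v) - gradient F x) v := by
      rw [inner_sub_left]
    have h2 : (inner ℝ (gradient F (x + t • v) - gradient F x) v : ℝ)
        ≤ ‖gradient F (x + t • v) - gradient F x‖ * ‖v‖ := real_inner_le_norm _ _
    have h3 : ‖gradient F (x + t • v) - gradient F x‖ ≤ β * ‖t • v‖ := by
      have := hlip (x + t • v) x
      simpa using this
    have h4 : ‖t • v‖ = t * ‖v‖ := by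
      rw [norm_smul, Real.norm_eq_abs, abs_of_nonneg ht.1]
    rw [h4] at h3
    have h5 : ‖gradient F (x + t • v) - gradient F x‖ * ‖v‖ ≤ (β * (t * ‖v‖)) * ‖v‖ :=
      mul_le_mul_of_nonneg_right h3 (norm_nonneg v)
    have h6 : (β * (t * ‖v‖)) * ‖v‖ = β * ‖v‖ ^ 2 * t := by ring
    linarith
  have hval : ∫ t in (0:ℝ)..1, ((inner ℝ (gradient F x) v : ℝ) + β * ‖v‖ ^ 2 * t)
      = (inner ℝ (gradient F x) v : ℝ) + β / 2 * ‖v‖ ^ 2 := by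
    rw [intervalIntegral.integral_add (intervalIntegrable_const)
      (g := fun t : ℝ => β * ‖v‖ ^ 2 * t)
      ((continuous_const.mul continuous_id').intervalIntegrable 0 1),
      intervalIntegral.integral_const,
      intervalIntegral.integral_const_mul]
    simp
    ring
  linarith [heq, hmono, hval.le, hval.ge]

lemma grad_sq_le {N : ℕ} {F : EuclideanSpace ℝ (Fin N) → ℝ} {β Fmin : ℝ} (hβ : 0 < β)
    (hdiff : Differentiable ℝ F)
    (hlip : ∀ x y, ‖gradient F x - gradient F y‖ ≤ β * ‖x - y‖)
    (hmin : ∀ x, Fmin ≤ F x) (x : EuclideanSpace ℝ (Fin N)) :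
    ‖gradient F x‖ ^ 2 ≤ 2 * β * (F x - Fmin) := by
  have h := descent_lemma hβ.le hdiff hlip x (-(β⁻¹ • gradient F x))
  have h1 : (inner ℝ (gradient F x) (-(β⁻¹ • gradient F x)) : ℝ) = -(β⁻¹ * ‖gradient F x‖ ^ 2) := by
    rw [inner_neg_right, real_inner_smul_right, real_inner_self_eq_norm_sq]
  have h2 : ‖-(β⁻¹ • gradient F x)‖ ^ 2 = β⁻¹ ^ 2 * ‖gradient F x‖ ^ 2 := by
    rw [norm_neg, norm_smul, Real.norm_eq_abs, abs_of_nonneg (inv_nonneg.mpr hβ.le), mul_pow]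
  have hm := hmin (x + -(β⁻¹ • gradient F x))
  rw [h1, h2] at h
  have hβne : β ≠ 0 := hβ.ne'
  have : Fmin ≤ F x - β⁻¹ * ‖gradient F x‖ ^ 2 + β / 2 * (β⁻¹ ^ 2 * ‖gradient F x‖ ^ 2) := by
    linarith
  have hid : β⁻¹ * ‖gradient F x‖ ^ 2 - β / 2 * (β⁻¹ ^ 2 * ‖gradient F x‖ ^ 2)
      = ‖gradient F x‖ ^ 2 / (2 * β) := by field_simp; ring
  have h3 : ‖gradient F x‖ ^ 2 / (2 * β) ≤ F x - Fmin := by linarith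
  calc ‖gradient F x‖ ^ 2 = (‖gradient F x‖ ^ 2 / (2 * β)) * (2 * β) := by field_simp
    _ ≤ (F x - Fmin) * (2 * β) := by nlinarith
    _ = 2 * β * (F x - Fmin) := by ring


lemma condexp_clm_comm {Ω E G : Type*} {m m0 : MeasurableSpace Ω} {μ : Measure Ω}
    [NormedAddCommGroup E] [NormedSpace ℝ E] [CompleteSpace E]
    [NormedAddCommGroup G] [NormedSpace ℝ G] [CompleteSpace G]
    (hm : m ≤ m0) [SigmaFinite (μ.trim hm)]
    (T : E →L[ℝ] G) {f : Ω → E} (hf : Integrable f μ) :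
    (μ[fun ω => T (f ω)|m]) =ᵐ[μ] fun ω => T ((μ[f|m]) ω) := by
  symm
  refine ae_eq_condExp_of_forall_setIntegral_eq hm (T.integrable_comp hf) ?_ ?_ ?_
  · intro s _ _
    exact (T.integrable_comp integrable_condExp).integrableOn
  · intro s hs hμs
    rw [T.integral_comp_comm integrable_condExp.integrableOn,
      T.integral_comp_comm hf.integrableOn, setIntegral_condExp hm hf hs]
  · exact (T.continuous.comp_stronglyMeasurable
      (stronglyMeasurable_condExp (m := m))).aestronglyMeasurable

lemma euclid_coord_le {N : ℕ} (x : EuclideanSpace ℝ (Fin N)) (i : Fin N) : |x i| ≤ ‖x‖ := by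
  rw [EuclideanSpace.norm_eq]
  have h1 : |x i| ^ 2 ≤ ∑ j, ‖x j‖ ^ 2 := by
    have := Finset.single_le_sum (f := fun j => ‖x j‖ ^ 2)
      (fun j _ => sq_nonneg _) (Finset.mem_univ i)
    simpa [Real.norm_eq_abs] using this
  calc |x i| = Real.sqrt (|x i| ^ 2) := by rw [Real.sqrt_sq (abs_nonneg _)]
    _ ≤ Real.sqrt (∑ j, ‖x j‖ ^ 2) := Real.sqrt_le_sqrt h1

lemma euclid_inner_eq_sum {N : ℕ} (u v : EuclideanSpace ℝ (Fin N)) :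
    (inner ℝ u v : ℝ) = ∑ i, u i * v i := by
  simp [PiLp.inner_apply, RCLike.inner_apply, mul_comm]

theorem stmt16 {N : ℕ} {Ω : Type*} {m : MeasurableSpace Ω} (μ : Measure Ω)
    [IsProbabilityMeasure μ] (ℱ : Filtration ℕ m)
    (F : EuclideanSpace ℝ (Fin N) → ℝ) (β Fmin : ℝ) (hβ : 0 < β)
    (hdiff : Differentiable ℝ F)
    (hlip : ∀ x y, ‖gradient F x - gradient F y‖ ≤ β * ‖x - y‖)
    (hmin : ∀ x, Fmin ≤ F x)
    (α a b c : ℕ → ℝ) (hα : ∀ k, 0 < α k)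
    (ha : ∀ k, 0 ≤ a k) (hb : ∀ k, 0 ≤ b k) (hc : ∀ k, 0 ≤ c k)
    (x g : ℕ → Ω → EuclideanSpace ℝ (Fin N))
    (hxadapt : Adapted ℱ x)
    (hupdate : ∀ k ω, x (k + 1) ω = x k ω - α k • g k ω)
    (hgint : ∀ k, Integrable (g k) μ)
    (hg2int : ∀ k, Integrable (fun ω => ‖g k ω‖ ^ 2) μ)
    (hFint : ∀ k, Integrable (fun ω => F (x k ω)) μ)
    (hmean : ∀ k, μ[g k|ℱ k] =ᵐ[μ] fun ω => gradient F (x k ω))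
    (hvar : ∀ k, μ[fun ω => ‖g k ω‖ ^ 2|ℱ k] ≤ᵐ[μ]
      fun ω => a k * (F (x k ω) - Fmin) + b k * ‖gradient F (x k ω)‖ ^ 2 + c k) :
    ∀ k, μ[fun ω => F (x (k + 1) ω)|ℱ k] ≤ᵐ[μ] fun ω =>
      Fmin + (1 + α k ^ 2 * a k * β / 2) * (F (x k ω) - Fmin)
        - α k * (1 - α k * b k * β / 2) * ‖gradient F (x k ω)‖ ^ 2
        + α k ^ 2 * c k * β / 2 := by
  intro k
  have hk : ℱ k ≤ m := ℱ.le k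
  set h : Ω → EuclideanSpace ℝ (Fin N) := fun ω => gradient F (x k ω) with hh_def
  have hhm : StronglyMeasurable[ℱ k] h :=
    (grad_lip_continuous hβ.le hlip).comp_stronglyMeasurable (hxadapt k).stronglyMeasurable
  have hhm0 : AEStronglyMeasurable h μ := (hhm.mono hk).aestronglyMeasurable
  -- integrability of ‖h‖²
  have hgrad2 : Integrable (fun ω => ‖h ω‖ ^ 2) μ := by
    refine Integrable.mono' (((hFint k).sub (integrable_const Fmin)).const_mul (2 * β))
      ((hhm.mono hk).norm.pow 2).aestronglyMeasurable (ae_of_all _ fun ω => ?_)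
    rw [Real.norm_eq_abs, abs_of_nonneg (sq_nonneg _)]
    exact grad_sq_le hβ hdiff hlip hmin (x k ω)
  -- integrability of coordinate products
  have hprod : ∀ i : Fin N, Integrable (fun ω => h ω i * g k ω i) μ := by
    intro i
    refine Integrable.mono' (hgrad2.add (hg2int k))
      (((EuclideanSpace.proj i : EuclideanSpace ℝ (Fin N) →L[ℝ] ℝ).continuous.comp_aestronglyMeasurable
        hhm0).mul
        ((EuclideanSpace.proj i : EuclideanSpace ℝ (Fin N) →L[ℝ] ℝ).continuous.comp_aestronglyMeasurable
        (hgint k).aestronglyMeasurable)) (ae_of_all _ fun ω => ?_)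
    have h1 : |h ω i| ≤ ‖h ω‖ := euclid_coord_le _ i
    have h2 : |g k ω i| ≤ ‖g k ω‖ := euclid_coord_le _ i
    simp only [Pi.add_apply]
    rw [Real.norm_eq_abs, abs_mul]
    have h3 : |h ω i| * |g k ω i| ≤ ‖h ω‖ * ‖g k ω‖ :=
      mul_le_mul h1 h2 (abs_nonneg _) (norm_nonneg _)
    nlinarith [sq_nonneg (‖h ω‖ - ‖g k ω‖), h3]
  -- integrability of the inner product
  have hinner_int : Integrable (fun ω => (inner ℝ (h ω) (g k ω) : ℝ)) μ := by
    have : (fun ω => (inner ℝ (h ω) (g k ω) : ℝ)) = fun ω => ∑ i, h ω i * g k ω i := by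
      funext ω; exact euclid_inner_eq_sum _ _
    rw [this]
    exact integrable_finset_sum _ fun i _ => hprod i
  -- pull-out property for the inner product
  have hpull : μ[fun ω => (inner ℝ (h ω) (g k ω) : ℝ)|ℱ k] =ᵐ[μ] fun ω => ‖h ω‖ ^ 2 := by
    have hsum : μ[fun ω => (inner ℝ (h ω) (g k ω) : ℝ)|ℱ k]
        =ᵐ[μ] ∑ i : Fin N, μ[fun ω => h ω i * g k ω i|ℱ k] := by
      have : (fun ω => (inner ℝ (h ω) (g k ω) : ℝ)) = ∑ i : Fin N, fun ω => h ω i * g k ω i := by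
        funext ω; simp only [Finset.sum_apply]; exact euclid_inner_eq_sum (h ω) (g k ω)
      rw [this]
      exact condExp_finsetSum (fun i _ => hprod i) (ℱ k)
    have hterm : ∀ᵐ ω ∂μ, ∀ i : Fin N,
        (μ[fun ω => h ω i * g k ω i|ℱ k]) ω = h ω i * h ω i := by
      rw [ae_all_iff]
      intro i
      have e1 : μ[fun ω => h ω i * g k ω i|ℱ k]
          =ᵐ[μ] fun ω => h ω i * (μ[fun ω => g k ω i|ℱ k]) ω := by
        have := condExp_mul_of_stronglyMeasurable_left (m := ℱ k) (μ := μ)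
          (f := fun ω => h ω i) (g := fun ω => g k ω i)
          (((EuclideanSpace.proj i : EuclideanSpace ℝ (Fin N) →L[ℝ] ℝ).continuous.comp_stronglyMeasurable hhm))
          (hprod i)
          ((EuclideanSpace.proj i : EuclideanSpace ℝ (Fin N) →L[ℝ] ℝ).integrable_comp (hgint k))
        exact this
      have e2 : μ[fun ω => g k ω i|ℱ k] =ᵐ[μ] fun ω => (μ[g k|ℱ k]) ω i :=
        condexp_clm_comm hk (EuclideanSpace.proj i) (hgint k)
      filter_upwards [e1, e2, hmean k] with ω h1 h2 h3
      rw [h1, h2, h3]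
    filter_upwards [hsum, hterm] with ω h1 h2
    rw [h1, Finset.sum_apply]
    have : ∑ i : Fin N, (μ[fun ω => h ω i * g k ω i|ℱ k]) ω = ∑ i, h ω i * h ω i := by
      exact Finset.sum_congr rfl fun i _ => h2 i
    rw [this, ← euclid_inner_eq_sum, real_inner_self_eq_norm_sq]
  -- the descent bound, pointwise
  set B : Ω → ℝ := (fun ω => F (x k ω)) + (-(α k)) • (fun ω => (inner ℝ (h ω) (g k ω) : ℝ))
      + (β * α k ^ 2 / 2) • (fun ω => ‖g k ω‖ ^ 2) with hB_def
  have hB_int : Integrable B μ :=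
    (((hFint k).add (hinner_int.smul (-(α k)))).add ((hg2int k).smul (β * α k ^ 2 / 2)))
  have hpt : ∀ ω, F (x (k + 1) ω) ≤ B ω := by
    intro ω
    have hd := descent_lemma hβ.le hdiff hlip (x k ω) (-(α k • g k ω))
    have hup : x (k + 1) ω = x k ω + -(α k • g k ω) := by
      rw [hupdate k ω, sub_eq_add_neg]
    have hi : (inner ℝ (gradient F (x k ω)) (-(α k • g k ω)) : ℝ)
        = -(α k * inner ℝ (h ω) (g k ω)) := by
      rw [inner_neg_right, real_inner_smul_right]
    have hn : ‖-(α k • g k ω)‖ ^ 2 = α k ^ 2 * ‖g k ω‖ ^ 2 := by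
      rw [norm_neg, norm_smul, Real.norm_eq_abs, abs_of_nonneg (hα k).le, mul_pow]
    rw [← hup, hi, hn] at hd
    simp only [hB_def, Pi.add_apply, Pi.smul_apply, smul_eq_mul]
    nlinarith [hd]
  -- conditional expectation inequalities
  have h1 : μ[fun ω => F (x (k + 1) ω)|ℱ k] ≤ᵐ[μ] μ[B|ℱ k] :=
    condExp_mono (hFint (k + 1)) hB_int (ae_of_all _ hpt)
  have e1 : μ[B|ℱ k] =ᵐ[μ] μ[(fun ω => F (x k ω)) + (-(α k)) • (fun ω => (inner ℝ (h ω) (g k ω) : ℝ))|ℱ k]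
      + μ[(β * α k ^ 2 / 2) • (fun ω => ‖g k ω‖ ^ 2)|ℱ k] :=
    condExp_add ((hFint k).add (hinner_int.smul (-(α k)))) ((hg2int k).smul (β * α k ^ 2 / 2)) (ℱ k)
  have e2 : μ[(fun ω => F (x k ω)) + (-(α k)) • (fun ω => (inner ℝ (h ω) (g k ω) : ℝ))|ℱ k]
      =ᵐ[μ] μ[fun ω => F (x k ω)|ℱ k] + μ[(-(α k)) • (fun ω => (inner ℝ (h ω) (g k ω) : ℝ))|ℱ k] :=
    condExp_add (hFint k) (hinner_int.smul (-(α k))) (ℱ k)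
  have e3 : μ[(-(α k)) • (fun ω => (inner ℝ (h ω) (g k ω) : ℝ))|ℱ k]
      =ᵐ[μ] (-(α k)) • μ[fun ω => (inner ℝ (h ω) (g k ω) : ℝ)|ℱ k] :=
    condExp_smul (-(α k)) _ (ℱ k)
  have e4 : μ[(β * α k ^ 2 / 2) • (fun ω => ‖g k ω‖ ^ 2)|ℱ k]
      =ᵐ[μ] (β * α k ^ 2 / 2) • μ[fun ω => ‖g k ω‖ ^ 2|ℱ k] :=
    condExp_smul (β * α k ^ 2 / 2) _ (ℱ k)
  have e5 : μ[fun ω => F (x k ω)|ℱ k] = fun ω => F (x k ω) :=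
    condExp_of_stronglyMeasurable hk
      (hdiff.continuous.comp_stronglyMeasurable (hxadapt k).stronglyMeasurable) (hFint k)
  filter_upwards [h1, e1, e2, e3, e4, hpull, hvar k] with ω H1 H2 H3 H4 H5 H6 H7
  have hC : 0 ≤ β * α k ^ 2 / 2 := by positivity
  have key : (μ[fun ω => F (x (k + 1) ω)|ℱ k]) ω ≤
      F (x k ω) - α k * ‖h ω‖ ^ 2 + (β * α k ^ 2 / 2) * ((μ[fun ω => ‖g k ω‖ ^ 2|ℱ k]) ω) := by
    have := H1
    rw [H2, Pi.add_apply, H3, Pi.add_apply, H4, H5] at this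
    rw [e5] at this
    simp only [Pi.smul_apply, smul_eq_mul] at this
    rw [H6] at this
    linarith
  have hvb : (μ[fun ω => ‖g k ω‖ ^ 2|ℱ k]) ω
      ≤ a k * (F (x k ω) - Fmin) + b k * ‖h ω‖ ^ 2 + c k := H7
  have : (μ[fun ω => F (x (k + 1) ω)|ℱ k]) ω ≤
      F (x k ω) - α k * ‖h ω‖ ^ 2
        + (β * α k ^ 2 / 2) * (a k * (F (x k ω) - Fmin) + b k * ‖h ω‖ ^ 2 + c k) := by
    nlinarith [key, hvb, hC]
  have hfin : F (x k ω) - α k * ‖h ω‖ ^ 2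
        + (β * α k ^ 2 / 2) * (a k * (F (x k ω) - Fmin) + b k * ‖h ω‖ ^ 2 + c k)
      = Fmin + (1 + α k ^ 2 * a k * β / 2) * (F (x k ω) - Fmin)
        - α k * (1 - α k * b k * β / 2) * ‖gradient F (x k ω)‖ ^ 2
        + α k ^ 2 * c k * β / 2 := by
    simp only [hh_def]
    ring
  linarith [this, hfin.le, hfin.ge]
end
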